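/- Let ρ ∈ ℰ₊, let (ρ_p)_{p≥1} be the nonincreasing sequence of nonzero eigenvalues of ρ counted with multiplicity, and let (λ_p[H])_{p≥1} be the nondecreasing sequence of eigenvalues of H counted with multiplicity. Then Tr(√H ρ √H) ≥ Σ_{p≥1} ρ_p λ_p[H]. -/

import Mathlib

/- Common setting (De Nitti–Méhats–Pinaud style quantum entropy minimization on the torus).

We model `L²(0,1)` with periodic boundary conditions as `L²` of the circle `ℝ/ℤ` with its
normalized Haar (Lebesgue) measure.  The free Hamiltonian `H = -d²/dx²` (periodic b.c.) is
diagonal in the Fourier basis `e_j(x) = exp(2iπjx)` with eigenvalues `μ_j = (2πj)²`; all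
trace-type quantities are expressed spectrally through this basis:
* `Tr T = Σ_j ⟨e_j, T e_j⟩`,
* `Tr(√H T √H) = Σ_j μ_j ⟨e_j, T e_j⟩` (since each `e_j` is an eigenvector of `√H`),
* `‖T‖²_{𝒥₂} = Σ_j ‖T e_j‖²`, and `‖√H T‖²_{𝒥₂} = Σ_j μ_j ‖T e_j‖²` for self-adjoint `T`,
* membership in `H¹_per`, the pairing with `H⁻¹_per` etc. are expressed via Fourier
  coefficients (`‖u'‖² = Σ_j μ_j |û_j|²`). -/

open MeasureTheory Real Filter

set_option synthInstance.maxHeartbeats 1000000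
set_option maxHeartbeats 1000000

noncomputable section

namespace QSM

local instance factOnePos : Fact ((0:ℝ) < 1) := ⟨one_pos⟩

/-- The one-dimensional torus `ℝ/ℤ`, modelling `[0,1]` with periodic boundary conditions. -/
abbrev Torus : Type := AddCircle (1:ℝ)

/-- The normalized Haar (= Lebesgue) measure on the torus. -/
abbrev μT : Measure Torus := @AddCircle.haarAddCircle 1 factOnePos

/-- The Hilbert space `L²(0,1)` (with periodic identification). -/
abbrev L2 : Type := Lp ℂ 2 μT

local instance instNUCFCL2 : NonUnitalContinuousFunctionalCalculus ℝ (L2 →L[ℂ] L2) IsSelfAdjoint :=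
  IsSelfAdjoint.instNonUnitalContinuousFunctionalCalculus

local instance instCFCL2 : ContinuousFunctionalCalculus ℝ (L2 →L[ℂ] L2) IsSelfAdjoint :=
  IsSelfAdjoint.instContinuousFunctionalCalculus

/-- The `j`-th Fourier exponential `x ↦ exp(2iπjx)` as an element of `L²`; these form a
Hilbert basis of eigenvectors of `H = -d²/dx²` with periodic boundary conditions. -/
def fE (j : ℤ) : L2 := fourierBasis j

/-- The eigenvalue `(2πj)²` of `H = -d²/dx²` on the Fourier mode `fE j`. -/
def muH (j : ℤ) : ℝ := (2 * π * j) ^ 2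

/-- The absolute value `|T| = √(T⋆T)` of an operator. -/
def absOp (T : L2 →L[ℂ] L2) : L2 →L[ℂ] L2 := CFC.sqrt (star T * T)

/-- The square root `√ρ` of a nonnegative operator. -/
def sqrtOp (ρ : L2 →L[ℂ] L2) : L2 →L[ℂ] L2 := CFC.sqrt ρ

/-- Diagonal trace sum `Σ_j Re⟨e_j, T e_j⟩` (the trace of `T`, when `T` is trace class). -/
def trD (T : L2 →L[ℂ] L2) : ℝ := ∑' j : ℤ, (inner ℂ (fE j) (T (fE j)) : ℂ).re

/-- The trace norm `Tr|T| = ‖T‖_{𝒥₁}`. -/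
def trNorm (T : L2 →L[ℂ] L2) : ℝ := trD (absOp T)

/-- `T` is trace class (`T ∈ 𝒥₁`). -/
def MemJ1 (T : L2 →L[ℂ] L2) : Prop :=
  Summable fun j : ℤ => (inner ℂ (fE j) (absOp T (fE j)) : ℂ).re

/-- Hilbert–Schmidt norm squared `‖T‖²_{𝒥₂} = Σ_j ‖T e_j‖²`. -/
def hsNormSq (T : L2 →L[ℂ] L2) : ℝ := ∑' j : ℤ, ‖T (fE j)‖ ^ 2

/-- `Tr(√H |T| √H) = Σ_j μ_j ⟨e_j, |T| e_j⟩`. -/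
def kinAbs (T : L2 →L[ℂ] L2) : ℝ :=
  ∑' j : ℤ, muH j * (inner ℂ (fE j) (absOp T (fE j)) : ℂ).re

/-- The kinetic energy `Tr(√H ρ √H) = Σ_j μ_j ⟨e_j, ρ e_j⟩`. -/
def kinE (ρ : L2 →L[ℂ] L2) : ℝ := ∑' j : ℤ, muH j * (inner ℂ (fE j) (ρ (fE j)) : ℂ).re

/-- `‖√H T‖²_{𝒥₂} = Σ_j μ_j ‖T e_j‖²` (valid for self-adjoint `T`). -/
def kinHSNormSq (T : L2 →L[ℂ] L2) : ℝ := ∑' j : ℤ, muH j * ‖T (fE j)‖ ^ 2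

/-- The energy space `ℰ`: self-adjoint trace-class `ρ` with `√H|ρ|√H` trace class. -/
def MemE (ρ : L2 →L[ℂ] L2) : Prop :=
  IsSelfAdjoint ρ ∧ MemJ1 ρ ∧
    Summable fun j : ℤ => muH j * (inner ℂ (fE j) (absOp ρ (fE j)) : ℂ).re

/-- The cone `ℰ₊` of nonnegative elements of the energy space. -/
def MemEplus (ρ : L2 →L[ℂ] L2) : Prop := MemE ρ ∧ 0 ≤ ρ

/-- The regularised entropy function `β_η(s) = (s+η)log(s+η) − s − η log η`;
for `η = 0` this is `β(s) = s log s − s` (with the convention `0 log 0 = 0`). -/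
def betaEnt (η : ℝ) (s : ℝ) : ℝ := (s + η) * Real.log (s + η) - s - η * Real.log η

/-- The von Neumann entropy `Tr(ρ log ρ − ρ)` (via the functional calculus). -/
def entropy (ρ : L2 →L[ℂ] L2) : ℝ := trD (cfc (fun s : ℝ => s * Real.log s - s) ρ)

/-- The free energy `F(ρ) = Tr(ρ log ρ − ρ) + Tr(√H ρ √H)`. -/
def freeEnergy (ρ : L2 →L[ℂ] L2) : ℝ := entropy ρ + kinE ρ

/-- The trace `Tr(Φρ) = Σ_j ⟨e_j, Φ·(ρ e_j)⟩` of `ρ` against a multiplication operator `Φ`. -/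
def traceAgainst (ρ : L2 →L[ℂ] L2) (Φ : Torus → ℂ) : ℂ :=
  ∑' j : ℤ, ∫ x, (starRingEnd ℂ) ((fE j : Torus → ℂ) x) * Φ x * ((ρ (fE j) : Torus → ℂ) x) ∂μT

/-- `n` is the local density `n[ρ]` of `ρ`: it is integrable and `Tr(Φρ) = ∫ Φ n`
for every bounded measurable `Φ` (acting by multiplication). -/
def IsDensity (ρ : L2 →L[ℂ] L2) (n : Torus → ℝ) : Prop :=
  Integrable n μT ∧
    ∀ Φ : Torus → ℂ, Measurable Φ → (∃ C, ∀ x, ‖Φ x‖ ≤ C) →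
      traceAgainst ρ Φ = ∫ x, Φ x * (n x : ℂ) ∂μT

/-- `H¹_per`-membership of a function, via its Fourier coefficients. -/
def MemH1Fun (u : Torus → ℂ) : Prop :=
  Integrable u μT ∧ Summable fun j : ℤ => (1 + muH j) * ‖fourierCoeff u j‖ ^ 2

/-- `H¹_per`-membership of an `L²` element, via its Fourier coefficients. -/
def MemH1 (u : L2) : Prop :=
  Summable fun j : ℤ => (1 + muH j) * ‖fourierBasis.repr u j‖ ^ 2

/-- The Dirichlet (kinetic) sesquilinear form `(√H u, √H v) = (u', v')`. -/
def QH (u v : L2) : ℂ :=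
  ∑' j : ℤ, (muH j : ℂ) * (starRingEnd ℂ) (fourierBasis.repr u j) * fourierBasis.repr v j

/-- Membership in `H⁻¹_per = (H¹_per)'` of the distribution `A = Σ_j a_j e_j` given by its
Fourier coefficients `a`. -/
def MemHm1 (a : ℤ → ℂ) : Prop := Summable fun j : ℤ => ‖a j‖ ^ 2 / (1 + muH j)

/-- The duality pairing `⟨A, v⟩_{H⁻¹_per, H¹_per} = Σ_j a_j v̂_{-j}` ("`∫ A v`"). -/
def pairHm1 (a : ℤ → ℂ) (v : Torus → ℂ) : ℂ := ∑' j : ℤ, a j * fourierCoeff v (-j)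

/-- The sesquilinear form `Q_A(u,v) = (u',v') + ⟨A, ū v⟩` for `A ∈ H⁻¹_per` (Fourier data `a`);
its diagonal is `Q_A(φ,φ) = ‖φ'‖² + ⟨A, |φ|²⟩`. -/
def QA (a : ℤ → ℂ) (u v : L2) : ℂ :=
  QH u v + pairHm1 a fun x => (starRingEnd ℂ) ((u : Torus → ℂ) x) * ((v : Torus → ℂ) x)

/-- The sesquilinear form `Q_A(u,v) = (u',v') + ∫ A ū v` for a potential `A ∈ L^∞`. -/
def QAfun (A : Torus → ℝ) (u v : L2) : ℂ :=
  QH u v + ∫ x, (A x : ℂ) * (starRingEnd ℂ) ((u : Torus → ℂ) x) * ((v : Torus → ℂ) x) ∂μT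

/-- `ρ = exp(−(H+A))` where `A ∈ H⁻¹_per`, given by its Fourier coefficients `a`, and `H+A`
is the self-adjoint operator (with compact resolvent) associated with the form `Q_A`:
there is a complete orthonormal system `(φ_p) ⊂ H¹_per` and reals `(μ_p)` such that the `φ_p`
are exactly the form-eigenvectors of `Q_A` with eigenvalues `μ_p`, and `ρ φ_p = exp(−μ_p) φ_p`. -/
def IsExpNegHA (a : ℤ → ℂ) (ρ : L2 →L[ℂ] L2) : Prop :=
  ∃ (φ : ℕ → L2) (μ : ℕ → ℝ),
    Orthonormal ℂ φ ∧ (Submodule.span ℂ (Set.range φ)).topologicalClosure = ⊤ ∧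
    ∀ p, MemH1 (φ p) ∧ ρ (φ p) = (Real.exp (-μ p) : ℂ) • φ p ∧
      ∀ ψ : L2, MemH1 ψ → QA a (φ p) ψ = (μ p : ℂ) * (inner ℂ (φ p) ψ : ℂ)

/-- `ρ = exp(−(H+A))` for a (bounded) real potential `A`, in the quadratic-form sense. -/
def IsExpNegHAfun (A : Torus → ℝ) (ρ : L2 →L[ℂ] L2) : Prop :=
  ∃ (φ : ℕ → L2) (μ : ℕ → ℝ),
    Orthonormal ℂ φ ∧ (Submodule.span ℂ (Set.range φ)).topologicalClosure = ⊤ ∧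
    ∀ p, MemH1 (φ p) ∧ ρ (φ p) = (Real.exp (-μ p) : ℂ) • φ p ∧
      ∀ ψ : L2, MemH1 ψ → QAfun A (φ p) ψ = (μ p : ℂ) * (inner ℂ (φ p) ψ : ℂ)

/-- A complete orthonormal eigenbasis of `ρ` with nonincreasing nonnegative eigenvalues
(the nonzero eigenvalues in nonincreasing order, counted with multiplicity, padded by `0`s). -/
def IsEigenbasis (ρ : L2 →L[ℂ] L2) (φ : ℕ → L2) (lam : ℕ → ℝ) : Prop :=
  Orthonormal ℂ φ ∧ (Submodule.span ℂ (Set.range φ)).topologicalClosure = ⊤ ∧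
    Antitone lam ∧ (∀ p, 0 ≤ lam p) ∧ ∀ p, ρ (φ p) = (lam p : ℂ) • φ p

/-- The hypothesis «`n ∈ H¹_per` and `n > 0` on `[0,1]`», stated for the continuous
representative of `n`. -/
def GoodDensity (n : Torus → ℝ) : Prop :=
  Continuous n ∧ (∀ x, 0 < n x) ∧
    Summable fun j : ℤ => (1 + muH j) * ‖fourierCoeff (fun x => (n x : ℂ)) j‖ ^ 2

/-- The penalized free energy `F_ε(ρ) = F(ρ) + (1/(2ε)) ‖n[ρ] − n‖²_{L²}`,
where `nρ = n[ρ]` is the density of `ρ`. -/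
def Feps (ε : ℝ) (n : Torus → ℝ) (ρ : L2 →L[ℂ] L2) (nρ : Torus → ℝ) : ℝ :=
  freeEnergy ρ + (1 / (2 * ε)) * ∫ x, (nρ x - n x) ^ 2 ∂μT

end QSM
namespace QSM

/-- The `p`-th eigenvalue of `H = -d²/dx²` (periodic b.c.) in nondecreasing order with
multiplicity: `0, (2π)², (2π)², (4π)², (4π)², …` (indexing from `p = 0`). -/
noncomputable def lamH (p : ℕ) : ℝ := (2 * Real.pi * (((p + 1) / 2 : ℕ) : ℝ)) ^ 2

attribute [local instance] factOnePos instNUCFCL2 instCFCL2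

open scoped ENNReal NNReal

/-! ### Auxiliary lemmas -/

/-- The explicit bijection `ℕ ≃ ℤ`: `0, 1, -1, 2, -2, …`. -/
def eNZ : ℕ ≃ ℤ where
  toFun p := if p % 2 = 1 then ((p + 1) / 2 : ℕ) else -((p / 2 : ℕ) : ℤ)
  invFun j := if 0 < j then 2 * j.toNat - 1 else 2 * (-j).toNat
  left_inv p := by
    simp only
    rcases Nat.even_or_odd p with ⟨m, hm⟩ | ⟨m, hm⟩
    · have h1 : p % 2 = 0 := by omega
      have h2 : p / 2 = m := by omega
      rw [if_neg (by omega), h2, if_neg (by omega)]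
      omega
    · have h1 : p % 2 = 1 := by omega
      have h2 : (p + 1) / 2 = m + 1 := by omega
      rw [if_pos h1, h2, if_pos (by positivity)]
      omega
  right_inv j := by
    simp only
    rcases lt_or_ge 0 j with h | h
    · rw [if_pos h]
      have h1 : (2 * j.toNat - 1) % 2 = 1 := by omega
      rw [if_pos h1]
      omega
    · rw [if_neg (not_lt.mpr h)]
      have h1 : (2 * (-j).toNat) % 2 ≠ 1 := by omega
      rw [if_neg h1]
      omega

lemma muH_eNZ (p : ℕ) : muH (eNZ p) = lamH p := by
  have key : (eNZ p) ^ 2 = ((((p + 1) / 2 : ℕ) : ℤ)) ^ 2 := by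
    show (if p % 2 = 1 then (((p + 1) / 2 : ℕ) : ℤ) else -((p / 2 : ℕ) : ℤ)) ^ 2 = _
    rcases Nat.even_or_odd p with ⟨m, hm⟩ | ⟨m, hm⟩
    · have h1 : p % 2 = 0 := by omega
      have h2 : p / 2 = m := by omega
      have h3 : (p + 1) / 2 = m := by omega
      rw [if_neg (by omega), h2, h3]; ring
    · have h1 : p % 2 = 1 := by omega
      rw [if_pos h1]
  have h : ((eNZ p : ℤ) : ℝ) ^ 2 = ((((p + 1) / 2 : ℕ) : ℝ)) ^ 2 := by
    rw [← Int.cast_pow, key]; norm_cast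
  simp only [muH, lamH, mul_pow]
  rw [h]

lemma lamH_nonneg (p : ℕ) : 0 ≤ lamH p := sq_nonneg _

lemma muH_nonneg (j : ℤ) : 0 ≤ muH j := sq_nonneg _

lemma lamH_mono : Monotone lamH := by
  intro a b hab
  simp only [lamH]
  have h1 : (((a + 1) / 2 : ℕ) : ℝ) ≤ (((b + 1) / 2 : ℕ) : ℝ) := by
    exact_mod_cast Nat.div_le_div_right (by omega)
  have h2 : (0:ℝ) ≤ 2 * Real.pi * (((a + 1) / 2 : ℕ) : ℝ) := by positivity
  have h3 : 2 * Real.pi * (((a + 1) / 2 : ℕ) : ℝ) ≤ 2 * Real.pi * (((b + 1) / 2 : ℕ) : ℝ) := by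
    have := Real.pi_pos; nlinarith
  exact pow_le_pow_left₀ h2 h3 2

open Finset in
/-- Abel summation: pointwise decomposition of an antitone nonnegative sequence. -/
lemma abel_pt (lam : ℕ → ℝ) (hanti : Antitone lam) (h0 : ∀ p, 0 ≤ lam p) (p : ℕ) :
    ENNReal.ofReal (lam p) = ENNReal.ofReal (⨅ q, lam q) +
      ∑' k, (if p ≤ k then ENNReal.ofReal (lam k - lam (k+1)) else 0) := by
  set l := ⨅ q, lam q with hl
  have bdd : BddBelow (Set.range lam) := ⟨0, by rintro _ ⟨q, rfl⟩; exact h0 q⟩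
  have hl_le : ∀ q, l ≤ lam q := fun q => ciInf_le bdd q
  have hl0 : 0 ≤ l := le_ciInf h0
  have htend : Tendsto lam atTop (nhds l) := tendsto_atTop_ciInf hanti bdd
  have htend' : Tendsto (fun N => lam (p + N)) atTop (nhds l) := by
    have h1 : Tendsto (fun N : ℕ => p + N) atTop atTop := by
      simpa [add_comm] using tendsto_add_atTop_nat p
    exact htend.comp h1
  have hpartial : ∀ N, ∑ k ∈ range N, (lam (p+k) - lam (p+k+1)) = lam p - lam (p+N) := by
    intro N
    have := Finset.sum_range_sub' (fun i => lam (p + i)) N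
    simpa [add_assoc] using this
  have hhs : HasSum (fun k => lam (p+k) - lam (p+k+1)) (lam p - l) := by
    rw [hasSum_iff_tendsto_nat_of_nonneg
      (fun k => sub_nonneg.2 (hanti (Nat.le_succ (p+k))))]
    simp only [hpartial]
    exact tendsto_const_nhds.sub htend'
  have hind : HasSum (fun k => if p ≤ k then lam k - lam (k+1) else 0) (lam p - l) := by
    have hinj : Function.Injective (fun k : ℕ => p + k) := add_right_injective p
    rw [← Function.Injective.hasSum_iff hinj (fun x hx => by
      rw [if_neg]; intro hle
      exact hx ⟨x - p, by simp; omega⟩)]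
    convert hhs using 1
    funext k
    simp [Function.comp, if_pos (Nat.le_add_right p k)]
  have h1 : ENNReal.ofReal (lam p - l) =
      ∑' k, (if p ≤ k then ENNReal.ofReal (lam k - lam (k+1)) else 0) := by
    rw [← hind.tsum_eq, ENNReal.ofReal_tsum_of_nonneg
      (fun k => by split
                   · exact sub_nonneg.2 (hanti (Nat.le_succ _))
                   · exact le_refl 0) hind.summable]
    exact tsum_congr fun k => by split <;> simp
  rw [← h1, ← ENNReal.ofReal_add hl0 (sub_nonneg.2 (hl_le p))]
  congr 1
  ring

open Finset in
/-- Abel summation under a weighted `tsum` in `ℝ≥0∞`. -/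
lemma abel_swap (lam : ℕ → ℝ) (hanti : Antitone lam) (h0 : ∀ p, 0 ≤ lam p) (x : ℕ → ℝ≥0∞) :
    ∑' p, ENNReal.ofReal (lam p) * x p
      = ENNReal.ofReal (⨅ q, lam q) * ∑' p, x p
        + ∑' k, ENNReal.ofReal (lam k - lam (k+1)) * ∑ p ∈ range (k+1), x p := by
  have key : ∀ p, ENNReal.ofReal (lam p) * x p
      = ENNReal.ofReal (⨅ q, lam q) * x p
        + ∑' k, (if p ≤ k then ENNReal.ofReal (lam k - lam (k+1)) * x p else 0) := by
    intro p
    rw [abel_pt lam hanti h0 p, add_mul]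
    congr 1
    rw [← ENNReal.tsum_mul_right]
    exact tsum_congr fun k => by rw [ite_mul, zero_mul]
  calc ∑' p, ENNReal.ofReal (lam p) * x p
      = ∑' p, (ENNReal.ofReal (⨅ q, lam q) * x p
          + ∑' k, (if p ≤ k then ENNReal.ofReal (lam k - lam (k+1)) * x p else 0)) := by
        exact tsum_congr key
    _ = ENNReal.ofReal (⨅ q, lam q) * ∑' p, x p
        + ∑' p, ∑' k, (if p ≤ k then ENNReal.ofReal (lam k - lam (k+1)) * x p else 0) := by
        rw [ENNReal.tsum_add, ENNReal.tsum_mul_left]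
    _ = _ := by
        congr 1
        rw [ENNReal.tsum_comm]
        apply tsum_congr; intro k
        have : ∀ p, (if p ≤ k then ENNReal.ofReal (lam k - lam (k+1)) * x p else 0)
            = ENNReal.ofReal (lam k - lam (k+1)) * (if p ≤ k then x p else 0) := by
          intro p; rw [mul_ite, mul_zero]
        rw [tsum_congr this, ENNReal.tsum_mul_left]
        congr 1
        rw [tsum_eq_sum (s := range (k+1)) (f := fun i => if i ≤ k then x i else 0)
          (fun p hp => if_neg (by simp at hp; omega))]
        exact Finset.sum_congr rfl fun p hp => if_pos (by simp at hp; omega)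

open Finset in
/-- The Ky Fan-type inequality: the sum of the `n` smallest eigenvalues of `H` bounds
`∑_j μ_j T_j` from below when `0 ≤ T ≤ 1` and `∑ T = n`. -/
lemma kyFan (n : ℕ) (T : ℤ → ℝ≥0∞) (hT1 : ∀ j, T j ≤ 1) (hTn : ∑' j, T j = n) :
    ∑ p ∈ range n, ENNReal.ofReal (lamH p) ≤ ∑' j : ℤ, ENNReal.ofReal (muH j) * T j := by
  rcases n with _ | m
  · simp
  set Λ : ℕ → ℝ≥0∞ := fun p => ENNReal.ofReal (lamH p) with hΛ
  set M : ℤ → ℝ≥0∞ := fun j => ENNReal.ofReal (muH j) with hM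
  set c : ℝ≥0∞ := ENNReal.ofReal (lamH m) with hc
  set X : ℝ≥0∞ := ∑' j, (c - M j) * T j with hX
  have hΛmono : Monotone Λ := fun a b h => ENNReal.ofReal_le_ofReal (lamH_mono h)
  have hX1 : X ≤ ∑ p ∈ range (m+1), (c - Λ p) := by
    calc X ≤ ∑' j, (c - M j) := ENNReal.tsum_le_tsum fun j => by
              calc (c - M j) * T j ≤ (c - M j) * 1 := mul_le_mul_right (hT1 j) _
                _ = c - M j := mul_one _
      _ = ∑' p, (c - Λ p) := by
          rw [← Equiv.tsum_eq eNZ (fun j => c - M j)]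
          exact tsum_congr fun p => by simp only [hM, hΛ]; rw [muH_eNZ]
      _ = ∑ p ∈ range (m+1), (c - Λ p) := by
          refine tsum_eq_sum fun p hp => tsub_eq_zero_of_le (hΛmono ?_)
          simp at hp; omega
  have hXtop : X ≠ ⊤ := by
    refine ne_top_of_le_ne_top ?_ hX1
    exact (ENNReal.sum_lt_top.mpr fun p _ =>
      lt_of_le_of_lt tsub_le_self ENNReal.ofReal_lt_top).ne
  have key : ∑ p ∈ range (m+1), Λ p + X ≤ (∑' j, M j * T j) + X := by
    calc ∑ p ∈ range (m+1), Λ p + X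
        ≤ ∑ p ∈ range (m+1), Λ p + ∑ p ∈ range (m+1), (c - Λ p) := add_le_add_right hX1 _
      _ = ∑ p ∈ range (m+1), (Λ p + (c - Λ p)) := Finset.sum_add_distrib.symm
      _ = ∑ p ∈ range (m+1), c := Finset.sum_congr rfl fun p hp => by
          rw [add_tsub_cancel_of_le (hΛmono (by simp at hp; omega : p ≤ m))]
      _ = ((m+1 : ℕ) : ℝ≥0∞) * c := by
          rw [Finset.sum_const, Finset.card_range, nsmul_eq_mul]
      _ = c * ∑' j, T j := by rw [hTn]; ring
      _ = ∑' j, c * T j := ENNReal.tsum_mul_left.symm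
      _ ≤ ∑' j, (M j * T j + (c - M j) * T j) := ENNReal.tsum_le_tsum fun j => by
          rw [← add_mul]; exact mul_le_mul_left le_add_tsub _
      _ = (∑' j, M j * T j) + X := ENNReal.tsum_add
  exact (ENNReal.add_le_add_iff_right hXtop).mp key

lemma hasSum_re' {ι : Type*} {g : ι → ℝ} {z : ℂ} (h : HasSum (fun i => ((g i : ℝ) : ℂ)) z) :
    HasSum g z.re := by
  simpa using ((Complex.hasSum_iff _ z).mp h).1

lemma conj_mul_norm (z : ℂ) : (starRingEnd ℂ) z * z = ((‖z‖ ^ 2 : ℝ) : ℂ) := by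
  rw [mul_comm, Complex.mul_conj, Complex.normSq_eq_norm_sq]

lemma mul_conj_norm' (z : ℂ) : z * (starRingEnd ℂ) z = ((‖(starRingEnd ℂ) z‖ ^ 2 : ℝ) : ℂ) := by
  rw [Complex.mul_conj, RCLike.norm_conj, Complex.normSq_eq_norm_sq]

lemma parseval_sq {ι E : Type*} [NormedAddCommGroup E] [InnerProductSpace ℂ E] [CompleteSpace E]
    (b : HilbertBasis ι ℂ E) (x : E) :
    HasSum (fun i => ‖(inner ℂ (b i) x : ℂ)‖ ^ 2) (‖x‖ ^ 2) := by
  have h := b.hasSum_inner_mul_inner x x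
  have he : (fun i => (inner ℂ x (b i) : ℂ) * (inner ℂ (b i) x : ℂ))
      = fun i => ((‖(inner ℂ (b i) x : ℂ)‖ ^ 2 : ℝ) : ℂ) := by
    funext i
    rw [← inner_conj_symm (b i) x]
    exact mul_conj_norm' _
  rw [he] at h
  have h3 := hasSum_re' h
  have h2 : (inner ℂ x x : ℂ) = ((‖x‖ ^ 2 : ℝ) : ℂ) := by
    rw [inner_self_eq_norm_sq_to_K]; norm_cast
  rw [h2] at h3
  rwa [Complex.ofReal_re] at h3


/-- For `ρ ∈ ℰ₊` with nonincreasing eigenvalues `(ρ_p)`,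
`Tr(√H ρ √H) ≥ Σ_p ρ_p λ_p[H]`. -/
theorem kinetic_energy_eigenvalue_lower_bound
    (ρ : L2 →L[ℂ] L2) (hρ : MemEplus ρ)
    (φ : ℕ → L2) (lam : ℕ → ℝ) (hdec : IsEigenbasis ρ φ lam) :
    Summable (fun p : ℕ => lam p * lamH p) ∧ ∑' p : ℕ, lam p * lamH p ≤ kinE ρ := by
  obtain ⟨⟨hsa, hJ1, hkin⟩, hpos⟩ := hρ
  obtain ⟨horth, hspan, hanti, hnn, heig⟩ := hdec
  have habs : absOp ρ = ρ := by
    unfold absOp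
    rw [hsa.star_eq, CFC.sqrt_mul_self ρ hpos]
  rw [habs] at hkin
  have hsar : ∀ x y : L2, (inner ℂ (ρ x) y : ℂ) = inner ℂ x (ρ y) := by
    intro x y
    conv_rhs => rw [← hsa.adjoint_eq]
    rw [ContinuousLinearMap.adjoint_inner_right]
  set b : HilbertBasis ℕ ℂ L2 := HilbertBasis.mk horth hspan.ge with hbdef
  have hb : ∀ p, b p = φ p := fun p => by
    rw [show ⇑b = φ from HilbertBasis.coe_mk _ _]
  -- F1 (real): spectral expansion of the diagonal matrix elements
  have hgsum : ∀ j, HasSum (fun p => lam p * ‖(inner ℂ (φ p) (fE j) : ℂ)‖ ^ 2)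
      ((inner ℂ (fE j) (ρ (fE j)) : ℂ).re) := by
    intro j
    have h := b.hasSum_inner_mul_inner (fE j) (ρ (fE j))
    have he : (fun p => (inner ℂ (fE j) (b p) : ℂ) * (inner ℂ (b p) (ρ (fE j)) : ℂ))
        = fun p => (((lam p * ‖(inner ℂ (φ p) (fE j) : ℂ)‖ ^ 2 : ℝ)) : ℂ) := by
      funext p
      have h1 : (inner ℂ (b p) (ρ (fE j)) : ℂ) = (lam p : ℂ) * inner ℂ (φ p) (fE j) := by
        rw [hb, ← hsar, heig p, inner_smul_left, Complex.conj_ofReal]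
      have h2 : (inner ℂ (fE j) (b p) : ℂ) = (starRingEnd ℂ) (inner ℂ (φ p) (fE j) : ℂ) := by
        rw [hb]
        exact (inner_conj_symm (𝕜 := ℂ) (fE j) (φ p)).symm
      rw [h1, h2]
      calc (starRingEnd ℂ) (inner ℂ (φ p) (fE j) : ℂ) * ((lam p : ℂ) * inner ℂ (φ p) (fE j))
          = (lam p : ℂ) * ((starRingEnd ℂ) (inner ℂ (φ p) (fE j) : ℂ) * inner ℂ (φ p) (fE j)) := by
            ring
        _ = (lam p : ℂ) * ((‖(inner ℂ (φ p) (fE j) : ℂ)‖ ^ 2 : ℝ) : ℂ) := by rw [conj_mul_norm]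
        _ = _ := by push_cast; ring
    rw [he] at h
    exact hasSum_re' h
  have hgnn : ∀ j p, 0 ≤ lam p * ‖(inner ℂ (φ p) (fE j) : ℂ)‖ ^ 2 := fun j p =>
    mul_nonneg (hnn p) (sq_nonneg _)
  have hre_nn : ∀ j, 0 ≤ (inner ℂ (fE j) (ρ (fE j)) : ℂ).re := fun j =>
    (hgsum j).nonneg (hgnn j)
  -- F1 (extended reals)
  have F1 : ∀ j, ENNReal.ofReal ((inner ℂ (fE j) (ρ (fE j)) : ℂ).re)
      = ∑' p, ENNReal.ofReal (lam p) * ENNReal.ofReal (‖(inner ℂ (φ p) (fE j) : ℂ)‖ ^ 2) := by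
    intro j
    rw [← (hgsum j).tsum_eq, ENNReal.ofReal_tsum_of_nonneg (hgnn j) (hgsum j).summable]
    exact tsum_congr fun p => ENNReal.ofReal_mul (hnn p)
  -- F2 : Parseval in the eigenbasis
  have F2 : ∀ j, ∑' p, ENNReal.ofReal (‖(inner ℂ (φ p) (fE j) : ℂ)‖ ^ 2) = 1 := by
    intro j
    have hp := parseval_sq b (fE j)
    simp only [hb] at hp
    have hnorm : ‖fE j‖ = 1 := by
      have : fE j = fourierBasis j := rfl
      rw [this]
      exact fourierBasis.orthonormal.1 j
    have h1 := ENNReal.ofReal_tsum_of_nonneg (fun p => sq_nonneg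
      (‖(inner ℂ (φ p) (fE j) : ℂ)‖)) hp.summable
    rw [hp.tsum_eq, hnorm] at h1
    simpa using h1.symm
  -- F3 : Parseval in the Fourier basis
  have F3 : ∀ p, ∑' j : ℤ, ENNReal.ofReal (‖(inner ℂ (φ p) (fE j) : ℂ)‖ ^ 2) = 1 := by
    intro p
    have hp := parseval_sq (fourierBasis : HilbertBasis ℤ ℂ L2) (φ p)
    have he : (fun j : ℤ => ‖(inner ℂ (fourierBasis j) (φ p) : ℂ)‖ ^ 2)
        = fun j : ℤ => ‖(inner ℂ (φ p) (fE j) : ℂ)‖ ^ 2 := by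
      funext j
      have h4 : ‖(inner ℂ (fourierBasis j) (φ p) : ℂ)‖ = ‖(inner ℂ (φ p) (fE j) : ℂ)‖ := by
        rw [show fE j = fourierBasis j from rfl]
        exact norm_inner_symm (𝕜 := ℂ) _ _
      rw [h4]
    rw [he] at hp
    have h1 := ENNReal.ofReal_tsum_of_nonneg (fun j => sq_nonneg
      (‖(inner ℂ (φ p) (fE j) : ℂ)‖)) hp.summable
    rw [hp.tsum_eq, horth.1 p] at h1
    simpa using h1.symm
  have hkinnn : 0 ≤ kinE ρ := by
    unfold kinE
    exact tsum_nonneg fun j => mul_nonneg (muH_nonneg j) (hre_nn j)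
  -- the kinetic energy in extended reals
  have EkinE : ENNReal.ofReal (kinE ρ) = ∑' p, ENNReal.ofReal (lam p) *
      ∑' j : ℤ, ENNReal.ofReal (muH j) * ENNReal.ofReal (‖(inner ℂ (φ p) (fE j) : ℂ)‖ ^ 2) := by
    unfold kinE
    rw [ENNReal.ofReal_tsum_of_nonneg (fun j => mul_nonneg (muH_nonneg j) (hre_nn j)) hkin]
    calc ∑' j : ℤ, ENNReal.ofReal (muH j * (inner ℂ (fE j) (ρ (fE j)) : ℂ).re)
        = ∑' j : ℤ, ENNReal.ofReal (muH j) *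
            ENNReal.ofReal ((inner ℂ (fE j) (ρ (fE j)) : ℂ).re) :=
          tsum_congr fun j => ENNReal.ofReal_mul (muH_nonneg j)
      _ = ∑' j : ℤ, ENNReal.ofReal (muH j) * ∑' p, ENNReal.ofReal (lam p) *
            ENNReal.ofReal (‖(inner ℂ (φ p) (fE j) : ℂ)‖ ^ 2) :=
          tsum_congr fun j => by rw [F1 j]
      _ = ∑' j : ℤ, ∑' p, ENNReal.ofReal (muH j) * (ENNReal.ofReal (lam p) *
            ENNReal.ofReal (‖(inner ℂ (φ p) (fE j) : ℂ)‖ ^ 2)) :=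
          tsum_congr fun j => ENNReal.tsum_mul_left.symm
      _ = ∑' p, ∑' j : ℤ, ENNReal.ofReal (muH j) * (ENNReal.ofReal (lam p) *
            ENNReal.ofReal (‖(inner ℂ (φ p) (fE j) : ℂ)‖ ^ 2)) := ENNReal.tsum_comm
      _ = _ := by
          refine tsum_congr fun p => ?_
          rw [← ENNReal.tsum_mul_left]
          exact tsum_congr fun j => by ring
  -- equality of the total masses
  have hΛsum : ∑' p, ENNReal.ofReal (lamH p) = ∑' j : ℤ, ENNReal.ofReal (muH j) := by
    rw [← Equiv.tsum_eq eNZ (fun j => ENNReal.ofReal (muH j))]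
    exact tsum_congr fun p => by rw [muH_eNZ]
  have hKsum : (∑' p, ∑' j : ℤ, ENNReal.ofReal (muH j) *
      ENNReal.ofReal (‖(inner ℂ (φ p) (fE j) : ℂ)‖ ^ 2)) = ∑' j : ℤ, ENNReal.ofReal (muH j) := by
    rw [ENNReal.tsum_comm]
    calc ∑' j : ℤ, ∑' p, ENNReal.ofReal (muH j) *
          ENNReal.ofReal (‖(inner ℂ (φ p) (fE j) : ℂ)‖ ^ 2)
        = ∑' j : ℤ, ENNReal.ofReal (muH j) *
            ∑' p, ENNReal.ofReal (‖(inner ℂ (φ p) (fE j) : ℂ)‖ ^ 2) :=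
          tsum_congr fun j => ENNReal.tsum_mul_left
      _ = ∑' j : ℤ, ENNReal.ofReal (muH j) := by
          exact tsum_congr fun j => by rw [F2 j, mul_one]
  -- Ky Fan bound on partial sums
  have SKn : ∀ n, ∑ p ∈ Finset.range n, ENNReal.ofReal (lamH p)
      ≤ ∑ p ∈ Finset.range n, ∑' j : ℤ, ENNReal.ofReal (muH j) *
          ENNReal.ofReal (‖(inner ℂ (φ p) (fE j) : ℂ)‖ ^ 2) := by
    intro n
    have hT1 : ∀ j : ℤ, (∑ p ∈ Finset.range n,
        ENNReal.ofReal (‖(inner ℂ (φ p) (fE j) : ℂ)‖ ^ 2)) ≤ 1 := fun j =>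
      le_trans (ENNReal.sum_le_tsum _) (le_of_eq (F2 j))
    have hTn : ∑' j : ℤ, (∑ p ∈ Finset.range n,
        ENNReal.ofReal (‖(inner ℂ (φ p) (fE j) : ℂ)‖ ^ 2)) = n := by
      rw [Summable.tsum_finsetSum fun p _ => ENNReal.summable, Finset.sum_congr rfl fun p _ => F3 p]
      simp
    have h := kyFan n _ hT1 hTn
    refine h.trans (le_of_eq ?_)
    calc ∑' j : ℤ, ENNReal.ofReal (muH j) * ∑ p ∈ Finset.range n,
          ENNReal.ofReal (‖(inner ℂ (φ p) (fE j) : ℂ)‖ ^ 2)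
        = ∑' j : ℤ, ∑ p ∈ Finset.range n, ENNReal.ofReal (muH j) *
            ENNReal.ofReal (‖(inner ℂ (φ p) (fE j) : ℂ)‖ ^ 2) :=
          tsum_congr fun j => Finset.mul_sum _ _ _
      _ = _ := Summable.tsum_finsetSum fun p _ => ENNReal.summable
  -- the main comparison via Abel summation
  have main : (∑' p, ENNReal.ofReal (lam p) * ENNReal.ofReal (lamH p))
      ≤ ∑' p, ENNReal.ofReal (lam p) * ∑' j : ℤ, ENNReal.ofReal (muH j) *
          ENNReal.ofReal (‖(inner ℂ (φ p) (fE j) : ℂ)‖ ^ 2) := by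
    rw [abel_swap lam hanti hnn, abel_swap lam hanti hnn]
    refine add_le_add (mul_le_mul_right ?_ _)
      (ENNReal.tsum_le_tsum fun k => mul_le_mul_right (SKn (k+1)) _)
    rw [hΛsum, hKsum]
  -- conclusion
  have hbound : ∀ n, ∑ p ∈ Finset.range n, lam p * lamH p ≤ kinE ρ := by
    intro n
    have h1 : ENNReal.ofReal (∑ p ∈ Finset.range n, lam p * lamH p)
        ≤ ENNReal.ofReal (kinE ρ) := by
      rw [ENNReal.ofReal_sum_of_nonneg (fun p _ => mul_nonneg (hnn p) (lamH_nonneg p))]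
      calc ∑ p ∈ Finset.range n, ENNReal.ofReal (lam p * lamH p)
          = ∑ p ∈ Finset.range n, ENNReal.ofReal (lam p) * ENNReal.ofReal (lamH p) :=
            Finset.sum_congr rfl fun p _ => ENNReal.ofReal_mul (hnn p)
        _ ≤ ∑' p, ENNReal.ofReal (lam p) * ENNReal.ofReal (lamH p) := ENNReal.sum_le_tsum _
        _ ≤ _ := main
        _ = ENNReal.ofReal (kinE ρ) := EkinE.symm
    exact (ENNReal.ofReal_le_ofReal_iff hkinnn).mp h1
  have hsummable : Summable fun p => lam p * lamH p :=
    summable_of_sum_range_le (fun p => mul_nonneg (hnn p) (lamH_nonneg p)) hbound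
  exact ⟨hsummable, Real.tsum_le_of_sum_range_le
    (fun p => mul_nonneg (hnn p) (lamH_nonneg p)) hbound⟩


end QSM
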